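/- Under the assumptions on ω, the map x ↦ (𝒥ρ)(x) is Lipschitz on [a,b] with |∂_x (𝒥ρ)(x)| ≤ ℒ ‖ρ‖_{L¹(]a,b[)}, where ℒ = ‖ω′‖_{L∞}/K_ω + ‖ω‖_{L∞}‖ω′‖_{L¹}/K_ω². -/

import Mathlib

open MeasureTheory Real

lemma param_deriv (a b : ℝ) (hab : a ≤ b)
    (ρ : ℝ → ℝ) (hρ : IntegrableOn ρ (Set.Ioc a b))
    (ω : ℝ → ℝ) (hω : ContDiff ℝ 2 ω) (Mω Mω' : ℝ)
    (hωbd : ∀ y, |ω y| ≤ Mω) (hω'bd : ∀ y, |deriv ω y| ≤ Mω') (x : ℝ) :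
    HasDerivAt (fun x => ∫ y in a..b, ρ y * ω (y - x))
      (∫ y in a..b, ρ y * (deriv ω (y - x) * (-1))) x := by
  have hωc : Continuous ω := hω.continuous
  have hω'c : Continuous (deriv ω) := hω.continuous_deriv one_le_two
  set μ : Measure ℝ := volume.restrict (Set.Ioc a b) with hμ
  have hρi : Integrable ρ μ := hρ
  have key := hasDerivAt_integral_of_dominated_loc_of_deriv_le
      (F := fun x y => ρ y * ω (y - x)) (F' := fun x y => ρ y * (deriv ω (y - x) * (-1)))
      (μ := μ) (x₀ := x) (bound := fun y => |ρ y| * Mω') (Metric.ball_mem_nhds x one_pos)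
      (Filter.Eventually.of_forall fun x' =>
        (hρi.aestronglyMeasurable.mul
          ((hωc.comp (continuous_id.sub continuous_const)).aestronglyMeasurable)))
      (Integrable.mono' (hρi.norm.mul_const Mω)
        (hρi.aestronglyMeasurable.mul
          ((hωc.comp (continuous_id.sub continuous_const)).aestronglyMeasurable))
        (Filter.Eventually.of_forall fun y => by
          simp only [Real.norm_eq_abs, abs_mul]
          exact mul_le_mul_of_nonneg_left (hωbd _) (abs_nonneg _)))
      ((hρi.aestronglyMeasurable.mul
        (((hω'c.comp (continuous_id.sub continuous_const)).mul continuous_const).aestronglyMeasurable)))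
      (Filter.Eventually.of_forall fun y => fun x' _ => by
        simp only [Real.norm_eq_abs, abs_mul, abs_neg, abs_one, mul_one]
        exact mul_le_mul_of_nonneg_left (hω'bd _) (abs_nonneg _))
      (hρi.norm.mul_const Mω')
      (Filter.Eventually.of_forall fun y => fun x' _ => by
        have h1 : HasDerivAt (fun x : ℝ => y - x) (-1) x' := by
          simpa using (hasDerivAt_id x').const_sub y
        have h2 : HasDerivAt ω (deriv ω (y - x')) (y - x') :=
          ((hω.differentiable (by simp)) (y - x')).hasDerivAt
        exact (h2.comp x' h1).const_mul (ρ y))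
  have h2 := key.2
  rw [intervalIntegral.integral_of_le hab]
  have : (fun x => ∫ y in a..b, ρ y * ω (y - x)) =
      fun x' => ∫ y, ρ y * ω (y - x') ∂μ := by
    funext x'
    rw [intervalIntegral.integral_of_le hab]
  rw [this]
  exact h2

theorem stmt1
    (a b Kω Mω Mω' : ℝ) (hab : a < b) (hKω : 0 < Kω)
    (ω : ℝ → ℝ) (hω : ContDiff ℝ 2 ω)
    (hωint : Integrable ω) (hω'int : Integrable (deriv ω))
    (hωbd : ∀ y, |ω y| ≤ Mω)
    (hω'bd : ∀ y, |deriv ω y| ≤ Mω')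
    (W : ℝ → ℝ) (hW : ∀ x, W x = ∫ y in a..b, ω (y - x))
    (hWlb : ∀ x ∈ Set.Icc a b, Kω ≤ W x)
    (ρ : ℝ → ℝ) (hρ : IntervalIntegrable ρ volume a b)
    (J : ℝ → ℝ) (hJ : ∀ x, J x = (∫ y in a..b, ρ y * ω (y - x)) / W x) :
    (∀ x ∈ Set.Icc a b,
        |deriv J x| ≤
          (Mω' / Kω + Mω * (∫ y, |deriv ω y|) / Kω ^ 2) * ∫ y in a..b, |ρ y|) ∧
    (∀ x ∈ Set.Icc a b, ∀ x' ∈ Set.Icc a b,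
        |J x - J x'| ≤
          (Mω' / Kω + Mω * (∫ y, |deriv ω y|) / Kω ^ 2) * (∫ y in a..b, |ρ y|) *
            |x - x'|) := by
  have hab' : a ≤ b := hab.le
  have hωc : Continuous ω := hω.continuous
  have hω'c : Continuous (deriv ω) := hω.continuous_deriv one_le_two
  set R : ℝ := ∫ y in a..b, |ρ y| with hRdef
  set I' : ℝ := ∫ y, |deriv ω y| with hI'def
  have hR : 0 ≤ R := intervalIntegral.integral_nonneg hab' fun y _ => abs_nonneg _
  have hI' : 0 ≤ I' := integral_nonneg fun y => abs_nonneg _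
  have hMω : 0 ≤ Mω := le_trans (abs_nonneg _) (hωbd 0)
  have hMω' : 0 ≤ Mω' := le_trans (abs_nonneg _) (hω'bd 0)
  set N : ℝ → ℝ := fun x => ∫ y in a..b, ρ y * ω (y - x) with hNdef
  set N' : ℝ → ℝ := fun x => ∫ y in a..b, ρ y * (deriv ω (y - x) * (-1)) with hN'def
  set W' : ℝ → ℝ := fun x => ∫ y in a..b, deriv ω (y - x) * (-1) with hW'def
  have hρ1 : IntegrableOn ρ (Set.Ioc a b) := hρ.1
  have hNd : ∀ x, HasDerivAt N (N' x) x :=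
    param_deriv a b hab' ρ hρ1 ω hω Mω Mω' hωbd hω'bd
  have hWd : ∀ x, HasDerivAt W (W' x) x := by
    intro x
    have h1 : IntegrableOn (fun _ : ℝ => (1 : ℝ)) (Set.Ioc a b) :=
      integrableOn_const measure_Ioc_lt_top.ne
    have key := param_deriv a b hab' (fun _ => (1 : ℝ)) h1 ω hω Mω Mω' hωbd hω'bd x
    simp only [one_mul] at key
    have hWeq : W = fun x => ∫ y in a..b, ω (y - x) := funext hW
    rw [hWeq]
    exact key
  -- integrability facts
  have hmeasF : ∀ x, AEStronglyMeasurable (fun y => ρ y * ω (y - x))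
      (volume.restrict (Set.Ioc a b)) := fun x =>
    (hρ1.aestronglyMeasurable.mul
      ((hωc.comp (continuous_id.sub continuous_const)).aestronglyMeasurable))
  have hFint : ∀ x, IntervalIntegrable (fun y => ρ y * ω (y - x)) volume a b := by
    intro x
    rw [intervalIntegrable_iff, Set.uIoc_of_le hab']
    exact Integrable.mono' (hρ1.norm.mul_const Mω) (hmeasF x)
      (Filter.Eventually.of_forall fun y => by
        simp only [Real.norm_eq_abs, abs_mul]
        exact mul_le_mul_of_nonneg_left (hωbd _) (abs_nonneg _))
  have hF'int : ∀ x, IntervalIntegrable (fun y => ρ y * (deriv ω (y - x) * (-1))) volume a b := by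
    intro x
    rw [intervalIntegrable_iff, Set.uIoc_of_le hab']
    exact Integrable.mono' (hρ1.norm.mul_const Mω')
      (hρ1.aestronglyMeasurable.mul
        (((hω'c.comp (continuous_id.sub continuous_const)).mul continuous_const).aestronglyMeasurable))
      (Filter.Eventually.of_forall fun y => by
        simp only [Real.norm_eq_abs, abs_mul, abs_neg, abs_one, mul_one]
        exact mul_le_mul_of_nonneg_left (hω'bd _) (abs_nonneg _))
  have hρabs : IntervalIntegrable (fun y => |ρ y|) volume a b := hρ.abs
  -- bound on N
  have hNbd : ∀ x, |N x| ≤ Mω * R := by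
    intro x
    calc |N x| ≤ ∫ y in a..b, |ρ y * ω (y - x)| :=
          intervalIntegral.abs_integral_le_integral_abs hab'
      _ ≤ ∫ y in a..b, Mω * |ρ y| := by
          apply intervalIntegral.integral_mono_on hab' (hFint x).abs
            (hρabs.const_mul Mω)
          intro y _
          rw [abs_mul, mul_comm]
          exact mul_le_mul_of_nonneg_right (hωbd _) (abs_nonneg _)
      _ = Mω * R := intervalIntegral.integral_const_mul _ _
  -- bound on N'
  have hN'bd : ∀ x, |N' x| ≤ Mω' * R := by
    intro x
    calc |N' x| ≤ ∫ y in a..b, |ρ y * (deriv ω (y - x) * (-1))| :=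
          intervalIntegral.abs_integral_le_integral_abs hab'
      _ ≤ ∫ y in a..b, Mω' * |ρ y| := by
          apply intervalIntegral.integral_mono_on hab' (hF'int x).abs
            (hρabs.const_mul Mω')
          intro y _
          rw [abs_mul, abs_mul, abs_neg, abs_one, mul_one, mul_comm]
          exact mul_le_mul_of_nonneg_right (hω'bd _) (abs_nonneg _)
      _ = Mω' * R := intervalIntegral.integral_const_mul _ _
  -- bound on W'
  have hW'bd : ∀ x, |W' x| ≤ I' := by
    intro x
    have e1 : W' x = -∫ y in a..b, deriv ω (y - x) := by
      rw [hW'def]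
      simp [intervalIntegral.integral_neg, mul_comm]
    rw [e1, abs_neg]
    calc |∫ y in a..b, deriv ω (y - x)| ≤ ∫ y in a..b, |deriv ω (y - x)| :=
          intervalIntegral.abs_integral_le_integral_abs hab'
      _ = ∫ t in (a - x)..(b - x), |deriv ω t| :=
          intervalIntegral.integral_comp_sub_right (fun t => |deriv ω t|) x
      _ ≤ I' := by
          rw [intervalIntegral.integral_of_le (by linarith : a - x ≤ b - x)]
          exact setIntegral_le_integral hω'int.abs
            (Filter.Eventually.of_forall fun y => abs_nonneg _)
  -- derivative of J
  have hJd : ∀ x ∈ Set.Icc a b,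
      HasDerivAt J ((N' x * W x - N x * W' x) / W x ^ 2) x := by
    intro x hx
    have hWne : W x ≠ 0 := ne_of_gt (lt_of_lt_of_le hKω (hWlb x hx))
    have hJeq : J = fun x => N x / W x := funext hJ
    rw [hJeq]
    exact (hNd x).div (hWd x) hWne
  set L : ℝ := Mω' / Kω + Mω * I' / Kω ^ 2 with hLdef
  have hbound : ∀ x ∈ Set.Icc a b, |deriv J x| ≤ L * R := by
    intro x hx
    have hWx : Kω ≤ W x := hWlb x hx
    have hWpos : 0 < W x := lt_of_lt_of_le hKω hWx
    rw [(hJd x hx).deriv]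
    have key : |(N' x * W x - N x * W' x) / W x ^ 2| ≤
        Mω' * R / Kω + Mω * R * I' / Kω ^ 2 := by
      rw [abs_div, abs_of_pos (pow_pos hWpos 2)]
      calc |N' x * W x - N x * W' x| / W x ^ 2
          ≤ (|N' x * W x| + |N x * W' x|) / W x ^ 2 := by
            apply div_le_div_of_nonneg_right (abs_sub _ _) (pow_pos hWpos 2).le
        _ = |N' x| * W x / W x ^ 2 + |N x| * |W' x| / W x ^ 2 := by
            rw [add_div, abs_mul, abs_mul, abs_of_pos hWpos]
        _ = |N' x| / W x + |N x| * |W' x| / W x ^ 2 := by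
            rw [sq]
            field_simp
        _ ≤ Mω' * R / Kω + Mω * R * I' / Kω ^ 2 := by
            apply add_le_add
            · exact div_le_div₀ (mul_nonneg hMω' hR) (hN'bd x) hKω hWx
            · apply div_le_div₀ (by positivity)
                (mul_le_mul (hNbd x) (hW'bd x) (abs_nonneg _) (by positivity))
                (by positivity) (pow_le_pow_left₀ hKω.le hWx 2)
    calc |(N' x * W x - N x * W' x) / W x ^ 2| ≤
        Mω' * R / Kω + Mω * R * I' / Kω ^ 2 := key
      _ = L * R := by rw [hLdef]; ring
  constructor
  · exact hbound
  · intro x hx x' hx'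
    have hdiff : ∀ z ∈ Set.Icc a b, HasDerivWithinAt J (deriv J z) (Set.Icc a b) z := by
      intro z hz
      exact ((hJd z hz).differentiableAt.hasDerivAt).hasDerivWithinAt
    have := (convex_Icc a b).norm_image_sub_le_of_norm_hasDerivWithin_le hdiff
      (fun z hz => by simpa [Real.norm_eq_abs] using hbound z hz) hx' hx
    simpa [Real.norm_eq_abs] using this
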